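/- Let k ⊆ K be an extension of fields, G a group, H a subgroup of G, and (M, σ) a k-linear representation of G. Write KG := MonoidAlgebra K G and KH := MonoidAlgebra K H. Let F := KG ⊗_{KH} K be the K-linear representation of G coinduced from the trivial one-dimensional representation K of H (G acting by left multiplication on the first tensor factor), regarded as a k-linear representation of G by restriction of scalars. Regard Hom_k(K, M) as a K-vector space via (c • f)(x) = f(x·c) and as a representation of G via g·f = σ(g) ∘ f. Then there is a k-linear G-equivariant isomorphism Hom_{KH}(KG, Hom_k(K, M)) ≅ Hom_k(F, M), where on the left-hand side Hom_{KH} denotes the left KH-linear maps (KH acting on KG by left multiplication), with G-action (g·F')(a) = F'(a·g), and on the right-hand side G acts by conjugation, (g·f)(x) = σ(g) f(g⁻¹ · x). Moreover, if K is finite-dimensional over k and H has finite index in G, then F is finite-dimensional over k, of k-dimension [K : k]·[G : H]. -/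

import Mathlib

open TensorProduct

variable (k K : Type*) [Field k] [Field K] [Algebra k K]
variable (G : Type*) [Group G] (H : Subgroup G)

/-- The relations defining `KG ⊗_{KH} W` (for a representation `μ` of `H` on `W`) as a
quotient of `KG ⊗_K W`. -/
noncomputable def indRel (W : Type*) [AddCommGroup W] [Module K W] (μ : Representation K H W) :
    Submodule (MonoidAlgebra K G) (MonoidAlgebra K G ⊗[K] W) :=
  Submodule.span (MonoidAlgebra K G)
    {z | ∃ (a : MonoidAlgebra K G) (h : H) (w : W),
      z = (a * MonoidAlgebra.of K G (h : G)) ⊗ₜ[K] w - a ⊗ₜ[K] (μ h w)}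

/-- The coinduced module `KG ⊗_{KH} W`, realized as the quotient of `KG ⊗_K W` by the
`KH`-balancing relations; `G` acts through left multiplication on the left factor. -/
abbrev Ind (W : Type*) [AddCommGroup W] [Module K W] (μ : Representation K H W) :=
  (MonoidAlgebra K G ⊗[K] W) ⧸ indRel K G H W μ

/-- `F = KG ⊗_{KH} K`, the representation of `G` coinduced from the trivial
one-dimensional representation of `H` over `K`. -/
abbrev coindTrivial := Ind K G H K (Representation.trivial K (G := H) (V := K))

variable (M : Type*) [AddCommGroup M] [Module k M]

/-- `Hom_{KH}(KG, Hom_k(K, M))`: the `k`-subspace of `Hom_k(KG, Hom_k(K, M))` of left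
`KH`-linear maps, where `Hom_k(K, M)` carries the `K`-structure `(c • f)(x) = f (x * c)`
and the `H`-action `h • f = σ h ∘ f`. -/
def homSub (σ : Representation k G M) :
    Submodule k (MonoidAlgebra K G →ₗ[k] (K →ₗ[k] M)) where
  carrier := {F | (∀ (c : K) (a : MonoidAlgebra K G) (x : K), F (c • a) x = F a (x * c)) ∧
    ∀ (h : H) (a : MonoidAlgebra K G) (x : K),
      F (MonoidAlgebra.of K G (h : G) * a) x = σ (h : G) (F a x)}
  add_mem' := by
    rintro f g ⟨hf1, hf2⟩ ⟨hg1, hg2⟩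
    constructor
    · intro c a x
      simp only [LinearMap.add_apply, hf1 c a x, hg1 c a x]
    · intro h a x
      simp only [LinearMap.add_apply, hf2 h a x, hg2 h a x, map_add]
  zero_mem' := by constructor <;> intros <;> simp
  smul_mem' := by
    rintro t f ⟨hf1, hf2⟩
    constructor
    · intro c a x
      simp only [LinearMap.smul_apply, hf1 c a x]
    · intro h a x
      simp only [LinearMap.smul_apply, hf2 h a x, map_smul]

section Stmt14Aux

variable {k K G M}
variable {H}
variable (σ : Representation k G M)

/-- Multiplication on the right as a `k`-linear map. -/
noncomputable def mulRK (c : K) : K →ₗ[k] K where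
  toFun x := x * c
  map_add' x y := add_mul x y c
  map_smul' t x := by simp [smul_mul_assoc]

@[simp] theorem mulRK_apply (c x : K) : mulRK (k := k) c x = x * c := rfl

theorem mk_rel (a : MonoidAlgebra K G) (h : H) (w : K) :
    (Submodule.Quotient.mk ((a * MonoidAlgebra.of K G (h : G)) ⊗ₜ[K] w) : coindTrivial K G H)
      = Submodule.Quotient.mk (a ⊗ₜ[K] w) := by
  rw [Submodule.Quotient.eq]
  exact Submodule.subset_span ⟨a, h, w, by rw [Representation.trivial_apply]⟩

@[elab_as_elim]
theorem ma_induction {p : MonoidAlgebra K G → Prop} (a : MonoidAlgebra K G) (h0 : p 0)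
    (hadd : ∀ f g : MonoidAlgebra K G, p f → p g → p (f + g))
    (hsingle : ∀ (u : G) (c : K), p (MonoidAlgebra.single u c)) : p a :=
  MonoidAlgebra.induction_linear a h0 hadd hsingle

@[elab_as_elim]
theorem fs_induction {p : ((G ⧸ H) →₀ K) → Prop} (a : (G ⧸ H) →₀ K) (h0 : p 0)
    (hadd : ∀ f g : (G ⧸ H) →₀ K, p f → p g → p (f + g))
    (hsingle : ∀ (q : G ⧸ H) (c : K), p (Finsupp.single q c)) : p a :=
  Finsupp.induction_linear a h0 hadd hsingle

theorem indRel_le_ker (f : (MonoidAlgebra K G ⊗[K] K) →ₗ[k] M)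
    (hf : ∀ (a : MonoidAlgebra K G) (h : H) (w : K),
      f ((a * MonoidAlgebra.of K G (h : G)) ⊗ₜ[K] w) = f (a ⊗ₜ[K] w)) :
    (indRel K G H K (Representation.trivial K H K)).restrictScalars k ≤ LinearMap.ker f := by
  intro z hz
  rw [Submodule.restrictScalars_mem] at hz
  have main : ∀ r : MonoidAlgebra K G, f (r • z) = 0 := by
    induction hz using Submodule.span_induction with
    | mem z hzS =>
      obtain ⟨a, h, w, rfl⟩ := hzS
      intro r
      have h1 : r • ((a * MonoidAlgebra.of K G (h : G)) ⊗ₜ[K] w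
            - a ⊗ₜ[K] ((Representation.trivial K H K) h w))
          = ((r * a) * MonoidAlgebra.of K G (h : G)) ⊗ₜ[K] w - (r * a) ⊗ₜ[K] w := by
        rw [Representation.trivial_apply, smul_sub, TensorProduct.smul_tmul',
          TensorProduct.smul_tmul', smul_eq_mul, smul_eq_mul, mul_assoc]
      rw [h1, map_sub, hf, sub_self]
    | zero => intro r; rw [smul_zero, map_zero]
    | add x y hx hy ihx ihy => intro r; rw [smul_add, map_add, ihx r, ihy r, add_zero]
    | smul c x hx ih => intro r; rw [smul_smul]; exact ih (r * c)
  simpa using main 1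

/-- Lift a `k`-linear map annihilating the relations to the quotient. -/
noncomputable def liftCo (f : (MonoidAlgebra K G ⊗[K] K) →ₗ[k] M)
    (hf : ∀ (a : MonoidAlgebra K G) (h : H) (w : K),
      f ((a * MonoidAlgebra.of K G (h : G)) ⊗ₜ[K] w) = f (a ⊗ₜ[K] w)) :
    coindTrivial K G H →ₗ[k] M :=
  (Submodule.liftQ ((indRel K G H K (Representation.trivial K H K)).restrictScalars k) f
      (indRel_le_ker f hf)).comp
    ((Submodule.Quotient.restrictScalarsEquiv k
        (indRel K G H K (Representation.trivial K H K))).symm.toLinearMap)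

@[simp] theorem liftCo_mk (f : (MonoidAlgebra K G ⊗[K] K) →ₗ[k] M)
    (hf : ∀ (a : MonoidAlgebra K G) (h : H) (w : K),
      f ((a * MonoidAlgebra.of K G (h : G)) ⊗ₜ[K] w) = f (a ⊗ₜ[K] w))
    (y : MonoidAlgebra K G ⊗[K] K) :
    liftCo f hf (Submodule.Quotient.mk y) = f y := by
  simp [liftCo, Submodule.Quotient.restrictScalarsEquiv_symm_mk]

theorem ext_co {N : Type*} [AddCommGroup N] [Module k N]
    {φ₁ φ₂ : coindTrivial K G H →ₗ[k] N}
    (hs : ∀ (u : G) (c w : K),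
      φ₁ (Submodule.Quotient.mk (MonoidAlgebra.single u c ⊗ₜ[K] w))
        = φ₂ (Submodule.Quotient.mk (MonoidAlgebra.single u c ⊗ₜ[K] w))) : φ₁ = φ₂ := by
  refine LinearMap.ext fun x => ?_
  obtain ⟨y, rfl⟩ := Submodule.Quotient.mk_surjective _ x
  induction y using TensorProduct.induction_on with
  | zero => simp
  | tmul a w =>
    induction a using ma_induction with
    | h0 => rw [show ((0 : MonoidAlgebra K G) ⊗ₜ[K] w) = 0 from TensorProduct.zero_tmul _ w]; simp
    | hadd f g hfa hga =>
      rw [show ((f + g : MonoidAlgebra K G) ⊗ₜ[K] w) = f ⊗ₜ[K] w + g ⊗ₜ[K] w from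
        TensorProduct.add_tmul f g w, Submodule.Quotient.mk_add, map_add, map_add, hfa, hga]
    | hsingle u c => exact hs u c w
  | add x y hx hy => rw [Submodule.Quotient.mk_add, map_add, map_add, hx, hy]

/-- The building block of `psi`. -/
noncomputable def psiInner (F : MonoidAlgebra K G →ₗ[k] (K →ₗ[k] M)) (u : G) :
    K →ₗ[k] (K →ₗ[k] M) where
  toFun c := ((σ u).comp (F (MonoidAlgebra.single u⁻¹ 1))).comp (mulRK c)
  map_add' c c' := by ext x; simp [mul_add]
  map_smul' t c := by ext x; simp [mul_smul_comm]

noncomputable def psi (F : MonoidAlgebra K G →ₗ[k] (K →ₗ[k] M)) :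
    MonoidAlgebra K G →ₗ[k] (K →ₗ[k] M) :=
  Finsupp.lsum k (psiInner σ F) ∘ₗ (MonoidAlgebra.coeffLinearEquiv k).toLinearMap

theorem psi_single (F : MonoidAlgebra K G →ₗ[k] (K →ₗ[k] M)) (u : G) (c x : K) :
    psi σ F (MonoidAlgebra.single u c) x = σ u (F (MonoidAlgebra.single u⁻¹ 1) (x * c)) := by
  rw [psi, LinearMap.comp_apply]
  change ((Finsupp.lsum k) (psiInner σ F) (Finsupp.single u c)) x = _
  erw [Finsupp.lsum_single]
  simp [psiInner]

noncomputable def fZero (F : MonoidAlgebra K G →ₗ[k] (K →ₗ[k] M)) :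
    (MonoidAlgebra K G ⊗[K] K) →ₗ[k] M :=
  ((LinearMap.applyₗ (1 : K)).comp (psi σ F)).comp
    (((TensorProduct.rid K (MonoidAlgebra K G)).toLinearMap).restrictScalars k)

theorem fZero_tmul (F : MonoidAlgebra K G →ₗ[k] (K →ₗ[k] M)) (a : MonoidAlgebra K G) (x : K) :
    fZero σ F (a ⊗ₜ[K] x) = psi σ F (x • a) 1 := by
  simp [fZero]

theorem fZero_single (F : MonoidAlgebra K G →ₗ[k] (K →ₗ[k] M)) (u : G) (c x : K) :
    fZero σ F (MonoidAlgebra.single u c ⊗ₜ[K] x) = σ u (F (MonoidAlgebra.single u⁻¹ 1) (x * c)) := by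
  rw [fZero_tmul, show x • (MonoidAlgebra.single u c : MonoidAlgebra K G)
      = MonoidAlgebra.single u (x * c) by rw [MonoidAlgebra.smul_single' x u c],
    psi_single, one_mul]

theorem sigma_cancel (g : G) (m : M) : σ g (σ g⁻¹ m) = m := by
  rw [← Module.End.mul_apply, ← map_mul, mul_inv_cancel, map_one, Module.End.one_apply]

theorem sigma_cancel' (g : G) (m : M) : σ g⁻¹ (σ g m) = m := by
  rw [← Module.End.mul_apply, ← map_mul, inv_mul_cancel, map_one, Module.End.one_apply]

theorem sigma_coe_cancel (h : H) (m : M) : σ (h : G) (σ ((h⁻¹ : H) : G) m) = m := by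
  rw [← Module.End.mul_apply, ← map_mul]
  simp

theorem F_single_mul {F : MonoidAlgebra K G →ₗ[k] (K →ₗ[k] M)}
    (hF2 : ∀ (h : H) (a : MonoidAlgebra K G) (x : K),
      F (MonoidAlgebra.of K G (h : G) * a) x = σ (h : G) (F a x))
    (h : H) (u : G) (y : K) :
    F (MonoidAlgebra.single ((h : G) * u) (1 : K)) y
      = σ (h : G) (F (MonoidAlgebra.single u (1 : K)) y) := by
  have h2 := hF2 h (MonoidAlgebra.single u (1 : K)) y
  rw [MonoidAlgebra.of_apply, MonoidAlgebra.single_mul_single, one_mul] at h2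
  exact h2

theorem mk_single_mul (v : G) (h : H) (y : K) :
    (Submodule.Quotient.mk ((MonoidAlgebra.single (v * (h : G)) (1 : K)) ⊗ₜ[K] y)
        : coindTrivial K G H)
      = Submodule.Quotient.mk (MonoidAlgebra.single v (1 : K) ⊗ₜ[K] y) := by
  have e := mk_rel (MonoidAlgebra.single v (1 : K)) h y
  rw [MonoidAlgebra.of_apply, MonoidAlgebra.single_mul_single, mul_one] at e
  exact e

theorem fZero_rel {F : MonoidAlgebra K G →ₗ[k] (K →ₗ[k] M)}
    (hF2 : ∀ (h : H) (a : MonoidAlgebra K G) (x : K),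
      F (MonoidAlgebra.of K G (h : G) * a) x = σ (h : G) (F a x)) :
    ∀ (a : MonoidAlgebra K G) (h : H) (w : K),
      fZero σ F ((a * MonoidAlgebra.of K G (h : G)) ⊗ₜ[K] w) = fZero σ F (a ⊗ₜ[K] w) := by
  intro a h w
  induction a using ma_induction with
  | h0 => rw [zero_mul]
  | hadd f g hfa hga =>
    rw [add_mul, TensorProduct.add_tmul, TensorProduct.add_tmul, map_add, map_add, hfa, hga]
  | hsingle u c =>
    rw [show MonoidAlgebra.single u c * MonoidAlgebra.of K G (h : G)
        = MonoidAlgebra.single (u * (h : G)) c by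
      rw [MonoidAlgebra.of_apply, MonoidAlgebra.single_mul_single, mul_one]]
    rw [fZero_single, fZero_single,
      show (u * (h : G))⁻¹ = ((h⁻¹ : H) : G) * u⁻¹ by simp [mul_inv_rev],
      F_single_mul σ hF2 h⁻¹ u⁻¹ (w * c), map_mul, Module.End.mul_apply, sigma_coe_cancel]

/-- Quotient map `KG ⊗ K → F` as a `k`-linear map. -/
noncomputable def mkCo : (MonoidAlgebra K G ⊗[K] K) →ₗ[k] coindTrivial K G H :=
  (Submodule.Quotient.restrictScalarsEquiv k
      (indRel K G H K (Representation.trivial K H K))).toLinearMap.comp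
    ((indRel K G H K (Representation.trivial K H K)).restrictScalars k).mkQ

@[simp] theorem mkCo_apply (x : MonoidAlgebra K G ⊗[K] K) :
    mkCo (k := k) (H := H) x = Submodule.Quotient.mk x := by
  simp [mkCo, Submodule.Quotient.restrictScalarsEquiv_mk]

noncomputable def tmulRight (v : G) : K →ₗ[k] (MonoidAlgebra K G ⊗[K] K) :=
  (TensorProduct.mk K (MonoidAlgebra K G) K (MonoidAlgebra.single v⁻¹ 1)).restrictScalars k

@[simp] theorem tmulRight_apply (v : G) (x : K) :
    tmulRight (k := k) v x = (MonoidAlgebra.single v⁻¹ 1 : MonoidAlgebra K G) ⊗ₜ[K] x := rfl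

noncomputable def thetaInner (φ : coindTrivial K G H →ₗ[k] M) (v : G) :
    K →ₗ[k] (K →ₗ[k] M) where
  toFun c := (((σ v).comp (φ.comp ((mkCo).comp (tmulRight v)))).comp (mulRK c))
  map_add' c c' := by ext x; simp [mul_add, TensorProduct.tmul_add]
  map_smul' t c := by
    ext x
    simp only [LinearMap.coe_comp, Function.comp_apply, mulRK_apply, LinearMap.smul_apply,
      RingHom.id_apply, tmulRight_apply, mkCo_apply, mul_smul_comm]
    rw [TensorProduct.tmul_smul]
    simp [map_smul]

noncomputable def theta (φ : coindTrivial K G H →ₗ[k] M) :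
    MonoidAlgebra K G →ₗ[k] (K →ₗ[k] M) :=
  Finsupp.lsum k (thetaInner σ φ) ∘ₗ (MonoidAlgebra.coeffLinearEquiv k).toLinearMap

theorem theta_single (φ : coindTrivial K G H →ₗ[k] M) (v : G) (c x : K) :
    theta σ φ (MonoidAlgebra.single v c) x
      = σ v (φ (Submodule.Quotient.mk
          ((MonoidAlgebra.single v⁻¹ 1 : MonoidAlgebra K G) ⊗ₜ[K] (x * c)))) := by
  rw [theta, LinearMap.comp_apply]
  change ((Finsupp.lsum k) (thetaInner σ φ) (Finsupp.single v c)) x = _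
  erw [Finsupp.lsum_single]
  simp [thetaInner]

theorem theta_mem (φ : coindTrivial K G H →ₗ[k] M) :
    theta σ φ ∈ homSub k K G H M σ := by
  constructor
  · intro c a x
    induction a using ma_induction with
    | h0 => simp
    | hadd f g hf hg =>
      simp only [smul_add, map_add, LinearMap.add_apply, hf, hg]
    | hsingle v c' =>
      rw [show c • (MonoidAlgebra.single v c' : MonoidAlgebra K G) = MonoidAlgebra.single v (c * c') from
        MonoidAlgebra.smul_single' c v c']
      rw [theta_single, theta_single, mul_assoc]
  · intro h a x
    induction a using ma_induction with
    | h0 => simp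
    | hadd f g hf hg =>
      simp only [mul_add, map_add, LinearMap.add_apply, hf, hg]
    | hsingle v c =>
      rw [show MonoidAlgebra.of K G (h : G) * MonoidAlgebra.single v c
          = MonoidAlgebra.single ((h : G) * v) c by
        rw [MonoidAlgebra.of_apply, MonoidAlgebra.single_mul_single, one_mul]]
      rw [theta_single, theta_single,
        show ((h : G) * v)⁻¹ = v⁻¹ * ((h⁻¹ : H) : G) by simp [mul_inv_rev],
        mk_single_mul v⁻¹ h⁻¹ (x * c), map_mul, Module.End.mul_apply]

theorem tmul_shift (u : G) (c w : K) :
    (MonoidAlgebra.single u (1 : K) : MonoidAlgebra K G) ⊗ₜ[K] (w * c)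
      = (MonoidAlgebra.single u c : MonoidAlgebra K G) ⊗ₜ[K] w := by
  calc (MonoidAlgebra.single u (1 : K) : MonoidAlgebra K G) ⊗ₜ[K] (w * c)
      = (MonoidAlgebra.single u (1 : K) : MonoidAlgebra K G) ⊗ₜ[K] (c • w) := by
        rw [smul_eq_mul, mul_comm]
    _ = (c • (MonoidAlgebra.single u (1 : K) : MonoidAlgebra K G)) ⊗ₜ[K] w :=
        (TensorProduct.smul_tmul _ _ _).symm
    _ = (MonoidAlgebra.single u c : MonoidAlgebra K G) ⊗ₜ[K] w := by
        rw [MonoidAlgebra.smul_single', mul_one]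

/-- The forward map of the main isomorphism. -/
noncomputable def phiMap (F : homSub k K G H M σ) : coindTrivial K G H →ₗ[k] M :=
  liftCo (fZero σ F.1) (fZero_rel σ F.2.2)

theorem phiMap_single (F : homSub k K G H M σ) (u : G) (c w : K) :
    phiMap σ F (Submodule.Quotient.mk ((MonoidAlgebra.single u c : MonoidAlgebra K G) ⊗ₜ[K] w))
      = σ u (F.1 (MonoidAlgebra.single u⁻¹ 1) (w * c)) := by
  rw [phiMap, liftCo_mk, fZero_single]

noncomputable def phiL : homSub k K G H M σ →ₗ[k] (coindTrivial K G H →ₗ[k] M) where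
  toFun := phiMap σ
  map_add' F F' := by
    refine ext_co fun u c w => ?_
    simp only [LinearMap.add_apply, phiMap_single, Submodule.coe_add, map_add]
  map_smul' t F := by
    refine ext_co fun u c w => ?_
    simp only [LinearMap.smul_apply, phiMap_single, Submodule.coe_smul, map_smul,
      RingHom.id_apply]

noncomputable def thetaL : (coindTrivial K G H →ₗ[k] M) →ₗ[k] homSub k K G H M σ where
  toFun φ := ⟨theta σ φ, theta_mem σ φ⟩
  map_add' φ φ' := by
    apply Subtype.ext
    simp only [Submodule.coe_add]
    refine LinearMap.ext fun a => ?_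
    induction a using ma_induction with
    | h0 => simp
    | hadd f g hf hg => rw [map_add, map_add, hf, hg]
    | hsingle v c =>
      refine LinearMap.ext fun x => ?_
      simp only [LinearMap.add_apply, theta_single, map_add]
  map_smul' t φ := by
    apply Subtype.ext
    simp only [RingHom.id_apply, Submodule.coe_smul]
    refine LinearMap.ext fun a => ?_
    induction a using ma_induction with
    | h0 => simp
    | hadd f g hf hg => rw [map_add, map_add, hf, hg]
    | hsingle v c =>
      refine LinearMap.ext fun x => ?_
      simp only [LinearMap.smul_apply, theta_single, map_smul]

theorem phi_theta (φ : coindTrivial K G H →ₗ[k] M) :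
    phiMap σ ⟨theta σ φ, theta_mem σ φ⟩ = φ := by
  refine ext_co fun u c w => ?_
  rw [phiMap_single]
  show σ u (theta σ φ (MonoidAlgebra.single u⁻¹ 1) (w * c)) = _
  rw [theta_single, inv_inv, mul_one, sigma_cancel, tmul_shift]

theorem theta_phi (F : homSub k K G H M σ) : theta σ (phiMap σ F) = F.1 := by
  refine LinearMap.ext fun a => ?_
  induction a using ma_induction with
  | h0 => simp
  | hadd f g hf hg => rw [map_add, map_add, hf, hg]
  | hsingle v c => ?_
  refine LinearMap.ext fun x => ?_
  rw [theta_single, phiMap_single, inv_inv, mul_one, sigma_cancel]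
  have e := F.2.1 c (MonoidAlgebra.single v (1 : K)) x
  rw [MonoidAlgebra.smul_single', mul_one] at e
  exact e.symm

/-- The main isomorphism `Hom_{KH}(KG, Hom_k(K,M)) ≃ Hom_k(F, M)`. -/
noncomputable def phiEquiv : homSub k K G H M σ ≃ₗ[k] (coindTrivial K G H →ₗ[k] M) :=
  LinearEquiv.ofLinear (phiL σ) (thetaL σ)
    (LinearMap.ext fun φ => phi_theta σ φ)
    (LinearMap.ext fun F => Subtype.ext (theta_phi σ F))

theorem phiEquiv_apply (F : homSub k K G H M σ) : phiEquiv σ F = phiMap σ F := rfl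

theorem smul_mk_single (g u : G) (c w : K) :
    (MonoidAlgebra.of K G g
        • (Submodule.Quotient.mk ((MonoidAlgebra.single u c : MonoidAlgebra K G) ⊗ₜ[K] w)
            : coindTrivial K G H))
      = (Submodule.Quotient.mk ((MonoidAlgebra.single (g * u) c : MonoidAlgebra K G) ⊗ₜ[K] w)
          : coindTrivial K G H) := by
  have e : MonoidAlgebra.of K G g • (MonoidAlgebra.single u c ⊗ₜ[K] w)
      = MonoidAlgebra.single (g * u) c ⊗ₜ[K] w := by
    rw [TensorProduct.smul_tmul']
    congr 1
    rw [smul_eq_mul, MonoidAlgebra.of_apply, MonoidAlgebra.single_mul_single, one_mul]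
  rw [← e, Submodule.Quotient.mk_smul]

/-- The map to the coset module. -/
noncomputable def toCosets : (MonoidAlgebra K G ⊗[K] K) →ₗ[k] ((G ⧸ H) →₀ K) :=
  ((Finsupp.lmapDomain K K (QuotientGroup.mk : G → G ⧸ H)).restrictScalars k).comp
    (((MonoidAlgebra.coeffLinearEquiv K).toLinearMap.comp
      (TensorProduct.rid K (MonoidAlgebra K G)).toLinearMap).restrictScalars k)

theorem toCosets_single (u : G) (c x : K) :
    toCosets (k := k) (H := H) ((MonoidAlgebra.single u c : MonoidAlgebra K G) ⊗ₜ[K] x)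
      = Finsupp.single (QuotientGroup.mk u : G ⧸ H) (x * c) := by
  rw [toCosets, LinearMap.comp_apply]
  change Finsupp.lmapDomain K K _
    (TensorProduct.rid K (MonoidAlgebra K G) (MonoidAlgebra.single u c ⊗ₜ[K] x)).coeff = _
  rw [TensorProduct.rid_tmul, MonoidAlgebra.smul_single', MonoidAlgebra.coeff_single,
    Finsupp.lmapDomain_apply, Finsupp.mapDomain_single]

theorem toCosets_rel :
    ∀ (a : MonoidAlgebra K G) (h : H) (w : K),
      toCosets (k := k) (H := H) ((a * MonoidAlgebra.of K G (h : G)) ⊗ₜ[K] w)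
        = toCosets (k := k) (H := H) (a ⊗ₜ[K] w) := by
  intro a h w
  induction a using ma_induction with
  | h0 => rw [zero_mul]
  | hadd f g hfa hga =>
    rw [add_mul, TensorProduct.add_tmul, TensorProduct.add_tmul, map_add, map_add, hfa, hga]
  | hsingle u c =>
    rw [MonoidAlgebra.of_apply, MonoidAlgebra.single_mul_single, mul_one,
      toCosets_single, toCosets_single]
    congr 1
    exact QuotientGroup.mk_mul_of_mem u h.2

noncomputable def toCosetsCo : coindTrivial K G H →ₗ[k] ((G ⧸ H) →₀ K) :=
  liftCo toCosets toCosets_rel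

noncomputable def fromInner (q : G ⧸ H) : K →ₗ[k] coindTrivial K G H :=
  mkCo.comp ((TensorProduct.mk K (MonoidAlgebra K G) K (MonoidAlgebra.single q.out 1)).restrictScalars k)

noncomputable def fromCosets : ((G ⧸ H) →₀ K) →ₗ[k] coindTrivial K G H :=
  Finsupp.lsum k fromInner

theorem fromCosets_single (q : G ⧸ H) (c : K) :
    fromCosets (k := k) (Finsupp.single q c)
      = Submodule.Quotient.mk (MonoidAlgebra.single q.out (1 : K) ⊗ₜ[K] c) := by
  rw [fromCosets]
  erw [Finsupp.lsum_single]
  simp [fromInner]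

theorem toCosets_fromCosets :
    (toCosetsCo (k := k) (K := K) (G := G) (H := H)).comp fromCosets = LinearMap.id := by
  refine LinearMap.ext fun a => ?_
  induction a using fs_induction with
  | h0 => simp
  | hadd f g hf hg => rw [map_add, map_add, hf, hg]
  | hsingle q c => ?_
  rw [LinearMap.comp_apply, LinearMap.id_apply, fromCosets_single, toCosetsCo, liftCo_mk,
    toCosets_single, mul_one]
  congr 1
  exact QuotientGroup.out_eq' q

theorem fromCosets_toCosets :
    (fromCosets (k := k) (K := K) (G := G) (H := H)).comp toCosetsCo = LinearMap.id := by
  refine ext_co fun u c w => ?_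
  rw [LinearMap.comp_apply, LinearMap.id_apply, toCosetsCo, liftCo_mk, toCosets_single,
    fromCosets_single]
  obtain ⟨h, hh⟩ := QuotientGroup.mk_out_eq_mul H u
  rw [hh, mk_single_mul u h (w * c), tmul_shift]

/-- `F ≃ K[G/H]` as `k`-vector spaces. -/
noncomputable def equivCosets : coindTrivial K G H ≃ₗ[k] ((G ⧸ H) →₀ K) :=
  LinearEquiv.ofLinear toCosetsCo fromCosets toCosets_fromCosets fromCosets_toCosets

end Stmt14Aux

/-- Let `k ⊆ K` be fields, `H ≤ G` groups, `σ` a `k`-linear representation of `G` on `M`,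
and `F = KG ⊗_{KH} K` the `K`-representation of `G` coinduced from the trivial
representation of `H`, viewed over `k` by restriction. Then there is a `G`-equivariant
`k`-linear isomorphism `Hom_{KH}(KG, Hom_k(K, M)) ≅ Hom_k(F, M)`, where `G` acts on the
source by `(g • F')(a) = F' (a * g)` and on the target by conjugation
`(g • f)(x) = σ g (f (g⁻¹ • x))`. Moreover if `K/k` is finite and `H` has finite index
in `G`, then `F` is finite-dimensional over `k` of dimension `[K : k] · [G : H]`. -/
theorem stmt14 (σ : Representation k G M) :
    (∃ (hstab : ∀ (g : G), ∀ F ∈ homSub k K G H M σ,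
        F.comp ((LinearMap.mulRight K (MonoidAlgebra.of K G g)).restrictScalars k)
          ∈ homSub k K G H M σ)
      (Φ : homSub k K G H M σ ≃ₗ[k] (coindTrivial K G H →ₗ[k] M)),
      ∀ (g : G) (F : homSub k K G H M σ) (x : coindTrivial K G H),
        Φ ⟨(F : MonoidAlgebra K G →ₗ[k] (K →ₗ[k] M)).comp
              ((LinearMap.mulRight K (MonoidAlgebra.of K G g)).restrictScalars k),
            hstab g F F.2⟩ x
          = σ g (Φ F (MonoidAlgebra.of K G g⁻¹ • x))) ∧
    (FiniteDimensional k K → H.index ≠ 0 →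
      FiniteDimensional k (coindTrivial K G H) ∧
        Module.finrank k (coindTrivial K G H) = Module.finrank k K * H.index) := by
  constructor
  · -- the isomorphism and equivariance
    have hstab : ∀ (g : G), ∀ F ∈ homSub k K G H M σ,
        F.comp ((LinearMap.mulRight K (MonoidAlgebra.of K G g)).restrictScalars k)
          ∈ homSub k K G H M σ := by
      intro g F hF
      constructor
      · intro c a x
        simp only [LinearMap.comp_apply, LinearMap.coe_restrictScalars,
          LinearMap.mulRight_apply]
        rw [smul_mul_assoc]
        exact hF.1 c (a * MonoidAlgebra.of K G g) x
      · intro h a x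
        simp only [LinearMap.comp_apply, LinearMap.coe_restrictScalars,
          LinearMap.mulRight_apply]
        rw [mul_assoc]
        exact hF.2 h (a * MonoidAlgebra.of K G g) x
    refine ⟨hstab, phiEquiv σ, ?_⟩
    intro g F x
    obtain ⟨y, rfl⟩ := Submodule.Quotient.mk_surjective _ x
    induction y using TensorProduct.induction_on with
    | zero => simp
    | add a b ha hb =>
      simp only [Submodule.Quotient.mk_add, map_add, smul_add, ha, hb]
    | tmul a w =>
      induction a using ma_induction with
      | h0 => rw [TensorProduct.zero_tmul]; simp
      | hadd f f' hf hf' =>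
        rw [TensorProduct.add_tmul]
        simp only [Submodule.Quotient.mk_add, map_add, smul_add, hf, hf']
      | hsingle u c =>
        rw [phiEquiv_apply, phiEquiv_apply, phiMap_single, smul_mk_single, phiMap_single]
        simp only [LinearMap.comp_apply, LinearMap.coe_restrictScalars,
          LinearMap.mulRight_apply]
        rw [MonoidAlgebra.of_apply, MonoidAlgebra.single_mul_single, one_mul,
          show (g⁻¹ * u)⁻¹ = u⁻¹ * g by rw [mul_inv_rev, inv_inv]]
        have key : ∀ m : M, σ g (σ (g⁻¹ * u) m) = σ u m := fun m => by
          rw [← Module.End.mul_apply, ← map_mul, mul_inv_cancel_left]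
        rw [key]
  · -- finite dimensionality
    intro hK hind
    have hfin : Finite (G ⧸ H) := by
      refine Nat.finite_of_card_ne_zero ?_
      rwa [← Subgroup.index_eq_card]
    have := Fintype.ofFinite (G ⧸ H)
    constructor
    · exact Module.Finite.equiv (equivCosets (k := k) (K := K) (G := G) (H := H)).symm
    · rw [LinearEquiv.finrank_eq (equivCosets (k := k) (K := K) (G := G) (H := H)),
        LinearEquiv.finrank_eq (Finsupp.linearEquivFunOnFinite k K (G ⧸ H)),
        Module.finrank_pi_fintype k, Finset.sum_const, Finset.card_univ, smul_eq_mul,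
        mul_comm, Subgroup.index_eq_card, Nat.card_eq_fintype_card]
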